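/- Let (Y, m, R) be an ergodic measure-preserving system and f ∈ L²(Y, m) with ∫ f dm = 0. For y ∈ Y and N ∈ ℕ, let a_N(y) be the cardinality of the set {S_n f(y) : 0 ≤ n ≤ N-1} where S_n f = ∑_{k=0}^{n-1} f∘R^k takes integer values. Then for m-a.e. y, lim_{N→∞} a_N(y)/N = 0. -/

import Mathlib

set_option linter.unusedSectionVars false
set_option linter.unnecessarySimpa false

open MeasureTheory Filter

section
variable {Y : Type*} [MeasurableSpace Y] {m : Measure Y} [IsProbabilityMeasure m]
  {R : Y → Y} {g : Y → ℝ}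

/-- Birkhoff sums. -/
noncomputable def bS (R : Y → Y) (g : Y → ℝ) (n : ℕ) (y : Y) : ℝ :=
  ∑ k ∈ Finset.range n, g (R^[k] y)

lemma bS_zero (R : Y → Y) (g : Y → ℝ) (y : Y) : bS R g 0 y = 0 := by simp [bS]

lemma bS_succ' (R : Y → Y) (g : Y → ℝ) (n : ℕ) (y : Y) :
    bS R g (n + 1) y = g y + bS R g n (R y) := by
  unfold bS
  rw [Finset.sum_range_succ']
  simp [Function.iterate_succ_apply]
  ring

lemma bS_measurable (hR : Measurable R) (hg : Measurable g) (n : ℕ) :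
    Measurable (bS R g n) := by
  apply Finset.measurable_sum
  exact fun k _ => hg.comp (hR.iterate k)

lemma bS_integrable (hR : MeasurePreserving R m m) (hg : Integrable g m) (n : ℕ) :
    Integrable (bS R g n) m := by
  apply integrable_finset_sum
  intro k _
  exact ((hR.iterate k).integrable_comp hg.aestronglyMeasurable).2 hg

/-- Running maxima of Birkhoff sums, `bF R g N y = max_{n ≤ N} bS R g n y`. -/
noncomputable def bF (R : Y → Y) (g : Y → ℝ) : ℕ → Y → ℝ
  | 0 => fun _ => 0
  | (N + 1) => fun y => max (bF R g N y) (bS R g (N + 1) y)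

lemma bF_nonneg (R : Y → Y) (g : Y → ℝ) (N : ℕ) (y : Y) : 0 ≤ bF R g N y := by
  induction N with
  | zero => simp [bF]
  | succ N ih => exact le_trans ih (le_max_left _ _)

lemma bF_mono (R : Y → Y) (g : Y → ℝ) (y : Y) : Monotone (fun N => bF R g N y) :=
  monotone_nat_of_le_succ fun N => le_max_left _ _

lemma bS_le_bF (R : Y → Y) (g : Y → ℝ) {n N : ℕ} (h : n ≤ N) (y : Y) :
    bS R g n y ≤ bF R g N y := by
  induction N with
  | zero => simp_all [bS_zero, bF]
  | succ N ih =>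
    rcases Nat.lt_or_ge n (N + 1) with h' | h'
    · exact le_trans (ih (Nat.lt_succ_iff.1 h')) (le_max_left _ _)
    · have : n = N + 1 := le_antisymm h h'
      subst this; exact le_max_right _ _

lemma bF_attained (R : Y → Y) (g : Y → ℝ) (N : ℕ) (y : Y) :
    ∃ n ≤ N, bF R g N y = bS R g n y := by
  induction N with
  | zero => exact ⟨0, le_refl _, by simp [bF, bS_zero]⟩
  | succ N ih =>
    rcases ih with ⟨n, hn, hval⟩
    rcases le_total (bS R g (N + 1) y) (bF R g N y) with h | h
    · exact ⟨n, hn.trans (Nat.le_succ _), by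
        show max (bF R g N y) (bS R g (N + 1) y) = _
        rw [max_eq_left h, hval]⟩
    · exact ⟨N + 1, le_refl _, by
        show max (bF R g N y) (bS R g (N + 1) y) = _
        rw [max_eq_right h]⟩

lemma bF_measurable (hR : Measurable R) (hg : Measurable g) (N : ℕ) :
    Measurable (bF R g N) := by
  induction N with
  | zero => simpa [bF] using measurable_const
  | succ N ih => exact Measurable.max ih (bS_measurable hR hg (N + 1))

lemma bF_integrable (hR : MeasurePreserving R m m) (hg : Integrable g m) (N : ℕ) :
    Integrable (bF R g N) m := by
  induction N with
  | zero => simpa [bF] using integrable_const (0 : ℝ)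
  | succ N ih =>
    show Integrable (fun y => max (bF R g N y) (bS R g (N + 1) y)) m
    exact ih.sup (bS_integrable hR hg (N + 1))

lemma integral_comp_eq (hR : MeasurePreserving R m m) {φ : Y → ℝ}
    (hφ : AEStronglyMeasurable φ m) : ∫ y, φ (R y) ∂m = ∫ y, φ y ∂m := by
  calc ∫ y, φ (R y) ∂m = ∫ y, φ y ∂(Measure.map R m) :=
        (integral_map hR.measurable.aemeasurable (by rwa [hR.map_eq])).symm
    _ = ∫ y, φ y ∂m := by rw [hR.map_eq]

/-- Garsia's maximal ergodic inequality. -/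
lemma garsia (hR : MeasurePreserving R m m) (hgm : Measurable g) (hgi : Integrable g m)
    (N : ℕ) : 0 ≤ ∫ y in {y | 0 < bF R g N y}, g y ∂m := by
  set E := {y | 0 < bF R g N y} with hE
  have hEm : MeasurableSet E := measurableSet_lt measurable_const (bF_measurable hR.measurable hgm N)
  -- pointwise: on E, bF N y - bF N (R y) ≤ g y
  have key : ∀ y ∈ E, bF R g N y - bF R g N (R y) ≤ g y := by
    intro y hy
    rcases bF_attained R g N y with ⟨n, hn, hval⟩
    have hn1 : 1 ≤ n := by
      rcases Nat.eq_zero_or_pos n with h | h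
      · exfalso; rw [hE, Set.mem_setOf_eq, hval, h, bS_zero] at hy; exact lt_irrefl _ hy
      · exact h
    obtain ⟨k, rfl⟩ : ∃ k, n = k + 1 := ⟨n - 1, (Nat.succ_pred_eq_of_pos hn1).symm⟩
    have : bS R g (k + 1) y = g y + bS R g k (R y) := bS_succ' R g k y
    have hk : k ≤ N := le_trans (Nat.le_succ k) hn
    have h2 : bS R g k (R y) ≤ bF R g N (R y) := bS_le_bF R g hk (R y)
    rw [hval, this]
    linarith
  have hFi := bF_integrable hR hgi N
  have hFRi : Integrable (fun y => bF R g N (R y)) m :=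
    (hR.integrable_comp hFi.aestronglyMeasurable).2 hFi
  have step1 : ∫ y in E, (bF R g N y - bF R g N (R y)) ∂m ≤ ∫ y in E, g y ∂m := by
    apply setIntegral_mono_on ((hFi.sub hFRi).integrableOn) hgi.integrableOn hEm
    exact key
  have step2 : ∫ y in E, (bF R g N y - bF R g N (R y)) ∂m
      = ∫ y in E, bF R g N y ∂m - ∫ y in E, bF R g N (R y) ∂m :=
    integral_sub hFi.integrableOn hFRi.integrableOn
  have step3 : ∫ y in E, bF R g N y ∂m = ∫ y, bF R g N y ∂m := by
    apply setIntegral_eq_integral_of_forall_compl_eq_zero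
    intro y hy
    have h1 : bF R g N y ≤ 0 := not_lt.1 hy
    exact le_antisymm h1 (bF_nonneg R g N y)
  have step4 : ∫ y in E, bF R g N (R y) ∂m ≤ ∫ y, bF R g N (R y) ∂m :=
    setIntegral_le_integral hFRi (Filter.Eventually.of_forall fun y => bF_nonneg R g N (R y))
  have step5 : ∫ y, bF R g N (R y) ∂m = ∫ y, bF R g N y ∂m :=
    integral_comp_eq hR hFi.aestronglyMeasurable
  linarith

end

section
variable {Y : Type*} [MeasurableSpace Y] {m : Measure Y} [IsProbabilityMeasure m]
  {R : Y → Y} {g : Y → ℝ}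

lemma bS_sub_const (R : Y → Y) (g : Y → ℝ) (c : ℝ) (n : ℕ) (y : Y) :
    bS R (fun z => g z - c) n y = bS R g n y - c * n := by
  simp [bS, Finset.sum_sub_distrib, mul_comm]

lemma measurableSet_A (hR : Measurable R) (hgm : Measurable g) (δ : ℝ) :
    MeasurableSet {y | ∃ᶠ n : ℕ in atTop, δ * n < bS R g n y} := by
  have : {y | ∃ᶠ n : ℕ in atTop, δ * (n : ℝ) < bS R g n y}
      = ⋂ N : ℕ, ⋃ n : ℕ, ⋃ (_ : N ≤ n), {y | δ * (n : ℝ) < bS R g n y} := by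
    ext y
    simp [Filter.frequently_atTop]
  rw [this]
  exact MeasurableSet.iInter fun N => MeasurableSet.iUnion fun n => MeasurableSet.iUnion fun _ =>
    measurableSet_lt measurable_const (bS_measurable hR hgm n)

lemma A_incl1 {δ δ' : ℝ} (hd : δ < δ') :
    {y | ∃ᶠ n : ℕ in atTop, δ' * n < bS R g n y} ⊆
      R ⁻¹' {y | ∃ᶠ n : ℕ in atTop, δ * n < bS R g n y} := by
  intro y hy
  simp only [Set.mem_preimage, Set.mem_setOf_eq, Filter.frequently_atTop] at hy ⊢
  intro N
  obtain ⟨M, hM⟩ : ∃ M : ℕ, g y - δ ≤ (δ' - δ) * M := by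
    refine ⟨⌈(g y - δ) / (δ' - δ)⌉₊, ?_⟩
    rw [← div_le_iff₀' (by linarith)]
    calc (g y - δ) / (δ' - δ) ≤ (⌈(g y - δ) / (δ' - δ)⌉₊ : ℝ) := Nat.le_ceil _
      _ = _ := by ring
  obtain ⟨q, hq1, hq2⟩ := hy (max (N + 1) M)
  have hq1' : N + 1 ≤ q := le_trans (le_max_left _ _) hq1
  have hqM : (M : ℝ) ≤ (q : ℝ) := by exact_mod_cast le_trans (le_max_right _ _) hq1
  refine ⟨q - 1, by omega, ?_⟩
  have hq0 : 1 ≤ q := by omega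
  have hsucc : (q - 1) + 1 = q := by omega
  have hdecomp : bS R g q y = g y + bS R g (q - 1) (R y) := by
    rw [← hsucc]; exact bS_succ' R g (q - 1) y
  have hcast : ((q - 1 : ℕ) : ℝ) = (q : ℝ) - 1 := by
    rw [Nat.cast_sub hq0]; norm_num
  rw [hcast]
  have hmul : (δ' - δ) * M ≤ (δ' - δ) * q := by
    apply mul_le_mul_of_nonneg_left hqM; linarith
  nlinarith [hq2, hdecomp]

lemma A_incl2 {δ δ'' : ℝ} (hd : δ'' < δ) :
    R ⁻¹' {y | ∃ᶠ n : ℕ in atTop, δ * n < bS R g n y} ⊆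
      {y | ∃ᶠ n : ℕ in atTop, δ'' * n < bS R g n y} := by
  intro y hy
  simp only [Set.mem_preimage, Set.mem_setOf_eq, Filter.frequently_atTop] at hy ⊢
  intro N
  obtain ⟨M, hM⟩ : ∃ M : ℕ, δ'' - g y ≤ (δ - δ'') * M := by
    refine ⟨⌈(δ'' - g y) / (δ - δ'')⌉₊, ?_⟩
    rw [← div_le_iff₀' (by linarith)]
    calc (δ'' - g y) / (δ - δ'') ≤ (⌈(δ'' - g y) / (δ - δ'')⌉₊ : ℝ) := Nat.le_ceil _
      _ = _ := by ring
  obtain ⟨q, hq1, hq2⟩ := hy (max N M)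
  have hqM : (M : ℝ) ≤ (q : ℝ) := by exact_mod_cast le_trans (le_max_right _ _) hq1
  refine ⟨q + 1, by omega, ?_⟩
  have hdecomp : bS R g (q + 1) y = g y + bS R g q (R y) := bS_succ' R g q y
  have hmul : (δ - δ'') * M ≤ (δ - δ'') * q := by
    apply mul_le_mul_of_nonneg_left hqM; linarith
  push_cast
  nlinarith [hq2, hdecomp]

lemma onesided (hR : MeasurePreserving R m m) (hErg : Ergodic R m) (hgm : Measurable g)
    (hgi : Integrable g m) (hmean : ∫ y, g y ∂m = 0) {ε : ℝ} (hε : 0 < ε) :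
    ∀ᵐ y ∂m, ∀ᶠ n in atTop, bS R g n y ≤ ε * n := by
  set ε' := ε / 2 with hε'
  have hε'pos : 0 < ε' := by positivity
  set A : ℝ → Set Y := fun δ => {y | ∃ᶠ n : ℕ in atTop, δ * n < bS R g n y} with hA
  set B : Set Y := ⋃ k : ℕ, A (ε' + 1 / (k + 1)) with hB
  have hBm : MeasurableSet B :=
    MeasurableSet.iUnion fun k => measurableSet_A hR.measurable hgm _
  have hBinv : R ⁻¹' B = B := by
    apply subset_antisymm
    · rw [hB, Set.preimage_iUnion]
      apply Set.iUnion_subset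
      intro k
      refine subset_trans (A_incl2 (show ε' + 1 / ((k + 1 : ℕ) + 1) < ε' + 1 / ((k : ℕ) + 1) by
        have : (1 : ℝ) / ((k + 1 : ℕ) + 1) < 1 / ((k : ℕ) + 1) := by
          apply one_div_lt_one_div_of_lt <;> push_cast <;> linarith
        linarith)) ?_
      exact Set.subset_iUnion (fun k : ℕ => A (ε' + 1 / (k + 1))) (k + 1)
    · apply Set.iUnion_subset
      intro k
      refine subset_trans (A_incl1 (show ε' + 1 / ((k + 1 : ℕ) + 1) < ε' + 1 / ((k : ℕ) + 1) by
        have : (1 : ℝ) / ((k + 1 : ℕ) + 1) < 1 / ((k : ℕ) + 1) := by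
          apply one_div_lt_one_div_of_lt <;> push_cast <;> linarith
        linarith)) (Set.preimage_mono ?_)
      exact Set.subset_iUnion (fun k : ℕ => A (ε' + 1 / (k + 1))) (k + 1)
  have hB01 := hErg.prob_eq_zero_or_one hBm hBinv
  have hBzero : m B = 0 := by
    rcases hB01 with h0 | h1
    · exact h0
    exfalso
    -- apply Garsia to h := g - ε'
    set h : Y → ℝ := fun z => g z - ε' with hh
    have hhm : Measurable h := hgm.sub measurable_const
    have hhi : Integrable h m := hgi.sub (integrable_const _)
    set Ainf : Set Y := ⋃ N, {y | 0 < bF R h N y} with hAinf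
    have hEm : ∀ N : ℕ, MeasurableSet {y | 0 < bF R h N y} := fun N =>
      measurableSet_lt measurable_const (bF_measurable hR.measurable hhm N)
    have hEmono : Monotone (fun N => {y | 0 < bF R h N y}) := by
      intro N N' hNN' y hy
      exact lt_of_lt_of_le hy (bF_mono R h y hNN')
    have hlim : Tendsto (fun N => ∫ y in {y | 0 < bF R h N y}, h y ∂m) atTop
        (nhds (∫ y in Ainf, h y ∂m)) :=
      tendsto_setIntegral_of_monotone hEm hEmono hhi.integrableOn
    have hnonneg : 0 ≤ ∫ y in Ainf, h y ∂m :=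
      ge_of_tendsto' hlim (fun N => garsia hR hhm hhi N)
    have hBsub : B ⊆ Ainf := by
      intro y hy
      rw [hB, Set.mem_iUnion] at hy
      obtain ⟨k, hk⟩ := hy
      rw [hA, Set.mem_setOf_eq, Filter.frequently_atTop] at hk
      obtain ⟨n, hn1, hn2⟩ := hk 1
      rw [hAinf, Set.mem_iUnion]
      refine ⟨n, ?_⟩
      have hpos : 0 < bS R h n y := by
        rw [hh, bS_sub_const]
        have h1n : (1 : ℝ) ≤ n := by exact_mod_cast hn1
        have : (0 : ℝ) < 1 / ((k : ℝ) + 1) * n := by positivity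
        nlinarith
      exact lt_of_lt_of_le hpos (bS_le_bF R h (le_refl n) y)
    have hAinfC : m Ainfᶜ = 0 := by
      have hBC : m Bᶜ = 0 := by
        rw [measure_compl hBm (measure_ne_top m B), h1, measure_univ]
        simp
      exact measure_mono_null (Set.compl_subset_compl.2 hBsub) hBC
    have hint : ∫ y in Ainf, h y ∂m = ∫ y, h y ∂m := by
      rw [Measure.restrict_congr_set (ae_eq_univ.2 hAinfC), Measure.restrict_univ]
    have hval : ∫ y, h y ∂m = -ε' := by
      rw [hh]
      rw [integral_sub hgi (integrable_const _), hmean, integral_const]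
      simp
    rw [hint, hval] at hnonneg
    linarith
  have hae : ∀ᵐ y ∂m, y ∉ B := measure_eq_zero_iff_ae_notMem.1 hBzero
  filter_upwards [hae] with y hy
  obtain ⟨k, hk⟩ : ∃ k : ℕ, 1 / ((k : ℝ) + 1) ≤ ε' := by
    refine ⟨⌈1 / ε'⌉₊, ?_⟩
    rw [div_le_iff₀ (by positivity), ← div_le_iff₀' hε'pos]
    calc 1 / ε' ≤ (⌈1 / ε'⌉₊ : ℝ) := Nat.le_ceil _
      _ ≤ (⌈1 / ε'⌉₊ : ℝ) + 1 := by linarith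
  have hy' : y ∉ A (ε' + 1 / ((k : ℝ) + 1)) := fun hmem =>
    hy (Set.mem_iUnion.2 ⟨k, by exact_mod_cast hmem⟩)
  rw [hA, Set.mem_setOf_eq, Filter.not_frequently] at hy'
  filter_upwards [hy'] with n hn
  rw [not_lt] at hn
  have hnn : (0 : ℝ) ≤ n := Nat.cast_nonneg n
  calc bS R g n y ≤ (ε' + 1 / ((k : ℝ) + 1)) * n := hn
    _ ≤ (ε' + ε') * n := by apply mul_le_mul_of_nonneg_right _ hnn; linarith
    _ = ε * n := by rw [hε']; ring
end

section
variable {Y : Type*} [MeasurableSpace Y] {m : Measure Y} [IsProbabilityMeasure m]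
  {R : Y → Y} {g : Y → ℝ}

lemma bS_neg (R : Y → Y) (g : Y → ℝ) (n : ℕ) (y : Y) :
    bS R (fun z => -g z) n y = -bS R g n y := by
  simp [bS]

lemma birkhoff_zero (hR : MeasurePreserving R m m) (hErg : Ergodic R m) (hgm : Measurable g)
    (hgi : Integrable g m) (hmean : ∫ y, g y ∂m = 0) :
    ∀ᵐ y ∂m, Tendsto (fun n : ℕ => bS R g n y / n) atTop (nhds 0) := by
  have hnegmean : ∫ y, -g y ∂m = 0 := by rw [integral_neg, hmean, neg_zero]
  have h1 : ∀ᵐ y ∂m, ∀ j : ℕ,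
      (∀ᶠ n : ℕ in atTop, bS R g n y ≤ (1 / ((j : ℝ) + 1)) * n) ∧
      (∀ᶠ n : ℕ in atTop, bS R (fun z => -g z) n y ≤ (1 / ((j : ℝ) + 1)) * n) := by
    rw [ae_all_iff]
    intro j
    have hpos : (0 : ℝ) < 1 / ((j : ℝ) + 1) := by positivity
    exact (onesided hR hErg hgm hgi hmean hpos).and
      (onesided hR hErg hgm.neg hgi.neg hnegmean hpos)
  filter_upwards [h1] with y hy
  rw [NormedAddCommGroup.tendsto_nhds_zero]
  intro ε hε
  obtain ⟨j, hj⟩ : ∃ j : ℕ, 1 / ((j : ℝ) + 1) < ε := by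
    refine ⟨⌈1 / ε⌉₊, ?_⟩
    rw [div_lt_iff₀ (by positivity)]
    have h1e : 1 ≤ (⌈1 / ε⌉₊ : ℝ) * ε := (div_le_iff₀ hε).1 (Nat.le_ceil (1 / ε))
    nlinarith
  obtain ⟨hu, hl⟩ := hy j
  filter_upwards [hu, hl, eventually_ge_atTop 1] with n hn1 hn2 hn3
  rw [bS_neg] at hn2
  have hnpos : (0 : ℝ) < n := by exact_mod_cast hn3
  have habs : |bS R g n y| ≤ (1 / ((j : ℝ) + 1)) * n := abs_le.2 ⟨by linarith, hn1⟩
  rw [Real.norm_eq_abs, abs_div, abs_of_pos hnpos, div_lt_iff₀ hnpos]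
  calc |bS R g n y| ≤ (1 / ((j : ℝ) + 1)) * n := habs
    _ < ε * n := by apply mul_lt_mul_of_pos_right hj hnpos

end

lemma count_lemma (S : ℕ → ℤ) (hS0 : S 0 = 0)
    (hT : Tendsto (fun n : ℕ => (S n : ℝ) / n) atTop (nhds 0)) :
    Tendsto (fun N : ℕ => (((Finset.range N).image S).card : ℝ) / N) atTop (nhds 0) := by
  rw [NormedAddCommGroup.tendsto_nhds_zero]
  intro ε hε
  have hε4 : (0 : ℝ) < ε / 4 := by positivity
  obtain ⟨n₀, hn₀⟩ := (Metric.tendsto_atTop.1 hT) (ε / 4) hε4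
  set Cn : ℕ := (Finset.range (n₀ + 1)).sup (fun n => (S n).natAbs) with hCn
  set C : ℝ := (Cn : ℝ) with hC
  have hC0 : 0 ≤ C := Nat.cast_nonneg _
  have key : ∀ N : ℕ, ∀ n < N, |(S n : ℝ)| ≤ ε / 4 * N + C := by
    intro N n hnN
    rcases Nat.lt_or_ge n (n₀ + 1) with h | h
    · have h1 : (S n).natAbs ≤ Cn := by
        rw [hCn]
        exact Finset.le_sup (f := fun n => (S n).natAbs) (Finset.mem_range.2 h)
      have h2 : |(S n : ℝ)| ≤ C := by
        rw [hC]
        have : |(S n : ℝ)| = ((S n).natAbs : ℝ) := by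
          rw [Nat.cast_natAbs, Int.cast_abs]
        rw [this]
        exact_mod_cast h1
      have hN0 : (0 : ℝ) ≤ N := Nat.cast_nonneg N
      nlinarith
    · have hn1 : 1 ≤ n := by omega
      have hnn : n₀ ≤ n := by omega
      have := hn₀ n hnn
      rw [Real.dist_eq, sub_zero, abs_div] at this
      have hnpos : (0 : ℝ) < n := by exact_mod_cast hn1
      have habs : |(n : ℝ)| = n := abs_of_pos hnpos
      rw [habs, div_lt_iff₀ hnpos] at this
      have hcast : (n : ℝ) ≤ N := by exact_mod_cast hnN.le
      nlinarith
  have cardb : ∀ N : ℕ, (((Finset.range N).image S).card : ℝ) ≤ ε / 2 * N + (2 * C + 3) := by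
    intro N
    set K : ℤ := ⌈ε / 4 * N + C⌉ with hK
    have hK0 : (0 : ℤ) ≤ K := Int.ceil_nonneg (by positivity)
    have hsub : (Finset.range N).image S ⊆ Finset.Icc (-K) K := by
      intro z hz
      rw [Finset.mem_image] at hz
      obtain ⟨n, hn, rfl⟩ := hz
      rw [Finset.mem_range] at hn
      have h1 : |(S n : ℝ)| ≤ (K : ℝ) := le_trans (key N n hn) (Int.le_ceil _)
      rw [abs_le] at h1
      rw [Finset.mem_Icc]
      constructor
      · have : ((-K : ℤ) : ℝ) ≤ ((S n : ℤ) : ℝ) := by push_cast; linarith [h1.1]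
        exact_mod_cast this
      · exact_mod_cast h1.2
    have hcard : ((Finset.range N).image S).card ≤ (K + 1 - -K).toNat := by
      rw [← Int.card_Icc]
      exact Finset.card_le_card hsub
    have hcastcard : (((Finset.range N).image S).card : ℝ) ≤ 2 * (K : ℝ) + 1 := by
      have h2 : ((K + 1 - -K).toNat : ℝ) = 2 * (K : ℝ) + 1 := by
        have : ((K + 1 - -K).toNat : ℤ) = K + 1 - -K := Int.toNat_of_nonneg (by omega)
        have h3 : ((K + 1 - -K).toNat : ℝ) = ((K + 1 - -K : ℤ) : ℝ) := by exact_mod_cast this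
        rw [h3]; push_cast; ring
      calc (((Finset.range N).image S).card : ℝ) ≤ ((K + 1 - -K).toNat : ℝ) := by
            exact_mod_cast hcard
        _ = 2 * (K : ℝ) + 1 := h2
    have hKle : (K : ℝ) ≤ ε / 4 * N + C + 1 := (Int.ceil_lt_add_one _).le
    calc (((Finset.range N).image S).card : ℝ) ≤ 2 * (K : ℝ) + 1 := hcastcard
      _ ≤ 2 * (ε / 4 * N + C + 1) + 1 := by linarith
      _ = ε / 2 * N + (2 * C + 3) := by ring
  set D : ℝ := 2 * C + 3 with hD
  have hD0 : 0 < D := by rw [hD]; linarith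
  filter_upwards [eventually_ge_atTop (max 1 (⌈2 * D / ε⌉₊ + 1))] with N hN
  have hN1 : 1 ≤ N := le_trans (le_max_left _ _) hN
  have hNpos : (0 : ℝ) < N := by exact_mod_cast hN1
  have hND : 2 * D / ε < N := by
    have h1 : (⌈2 * D / ε⌉₊ + 1 : ℕ) ≤ N := le_trans (le_max_right _ _) hN
    have h2 : ((⌈2 * D / ε⌉₊ + 1 : ℕ) : ℝ) ≤ N := by exact_mod_cast h1
    have h3 := Nat.le_ceil (2 * D / ε)
    push_cast at h2
    linarith
  rw [Real.norm_eq_abs, abs_of_nonneg (by positivity), div_lt_iff₀ hNpos]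
  have hb := cardb N
  rw [div_lt_iff₀ hε] at hND
  nlinarith

theorem stmt_10 {Y : Type*} [MeasurableSpace Y] (m : Measure Y) [IsProbabilityMeasure m]
    (R : Y → Y) (hR : MeasurePreserving R m m) (hErg : Ergodic R m)
    (f : Y → ℤ) (hf : MemLp (fun y => (f y : ℝ)) 2 m)
    (hmean : ∫ y, (f y : ℝ) ∂m = 0)
    (a : ℕ → Y → ℕ)
    (ha : ∀ N y, a N y =
      ((Finset.range N).image (fun n => ∑ k ∈ Finset.range n, f (R^[k] y))).card) :
    ∀ᵐ y ∂m, Filter.Tendsto (fun N : ℕ => (a N y : ℝ) / N) Filter.atTop (nhds 0) := by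
  have hfi : Integrable (fun y => (f y : ℝ)) m := hf.integrable one_le_two
  set g : Y → ℝ := hf.1.mk _ with hg
  have hgsm : StronglyMeasurable g := hf.1.stronglyMeasurable_mk
  have heq : (fun y => (f y : ℝ)) =ᵐ[m] g := hf.1.ae_eq_mk
  have hgm : Measurable g := hgsm.measurable
  have hgi : Integrable g m := hfi.congr heq
  have hgmean : ∫ y, g y ∂m = 0 := by rw [← integral_congr_ae heq]; exact hmean
  have hbirk := birkhoff_zero hR hErg hgm hgi hgmean
  have haeeq : ∀ᵐ y ∂m, ∀ n : ℕ,
      bS R g n y = ((∑ k ∈ Finset.range n, f (R^[k] y) : ℤ) : ℝ) := by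
    rw [ae_all_iff]
    intro n
    have : ∀ᵐ y ∂m, ∀ k : ℕ, k < n → g (R^[k] y) = ((f (R^[k] y) : ℤ) : ℝ) := by
      rw [ae_all_iff]
      intro k
      filter_upwards [(hR.iterate k).quasiMeasurePreserving.ae_eq_comp heq.symm] with y hy _
      exact hy
    filter_upwards [this] with y hy
    rw [bS]
    push_cast
    exact Finset.sum_congr rfl fun k hk => hy k (Finset.mem_range.1 hk)
  filter_upwards [hbirk, haeeq] with y h1 h2
  have h1' : Tendsto
      (fun n : ℕ => ((∑ k ∈ Finset.range n, f (R^[k] y) : ℤ) : ℝ) / n) atTop (nhds 0) := by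
    apply h1.congr
    intro n
    rw [h2 n]
  have hcl := count_lemma (fun n => ∑ k ∈ Finset.range n, f (R^[k] y)) (by simp) h1'
  apply hcl.congr
  intro N
  rw [ha N y]
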